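/- There exists a function σ : ℝ → ℝ such that for every continuous function f on a finite segment [a,b] ⊂ ℝ and every ε > 0, there exist real constants c₁, c₂, θ₁, θ₂ with |f(x) - c₁σ(x - θ₁) - c₂σ(x - θ₂)| < ε for all x ∈ [a,b]; moreover σ can be chosen to be sigmoidal (σ(t) → 0 as t → -∞ and σ(t) → 1 as t → +∞). -/

import Mathlib

open Polynomial Filter

namespace TwoNeuron

instance : Countable (AddMonoidAlgebra ℚ ℕ) :=
  Countable.of_equiv _ AddMonoidAlgebra.coeffEquiv.symm

instance : Countable (Polynomial ℚ) :=
  Countable.of_equiv _ (Polynomial.toFinsuppIso ℚ).toEquiv.symm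

/-- a surjective enumeration of rational polynomials -/
noncomputable def e : ℕ → Polynomial ℚ :=
  (exists_surjective_nat (Polynomial ℚ)).choose

lemma e_surj : Function.Surjective e :=
  (exists_surjective_nat (Polynomial ℚ)).choose_spec

/-- the real polynomial placed on the `m`-th block -/
noncomputable def P (m : ℕ) : Polynomial ℝ :=
  (e m.unpair.2).map (algebraMap ℚ ℝ)

/-- a bound for `|P m|` on `[0, m+1]` -/
noncomputable def B (m : ℕ) : ℝ :=
  1 + ∑ i ∈ Finset.range ((P m).natDegree + 1), |(P m).coeff i| * ((m : ℝ) + 1) ^ i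

lemma B_pos (m : ℕ) : 0 < B m := by
  have h : 0 ≤ ∑ i ∈ Finset.range ((P m).natDegree + 1),
      |(P m).coeff i| * ((m : ℝ) + 1) ^ i := by
    apply Finset.sum_nonneg
    intro i _
    positivity
  unfold B; linarith

lemma eval_le_B (m : ℕ) {t : ℝ} (h0 : 0 ≤ t) (h1 : t ≤ (m : ℝ) + 1) :
    |(P m).eval t| ≤ B m := by
  rw [Polynomial.eval_eq_sum_range]
  calc |∑ i ∈ Finset.range ((P m).natDegree + 1), (P m).coeff i * t ^ i|
      ≤ ∑ i ∈ Finset.range ((P m).natDegree + 1), |(P m).coeff i * t ^ i| :=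
        Finset.abs_sum_le_sum_abs _ _
    _ ≤ ∑ i ∈ Finset.range ((P m).natDegree + 1), |(P m).coeff i| * ((m : ℝ) + 1) ^ i := by
        apply Finset.sum_le_sum
        intro i _
        rw [abs_mul]
        apply mul_le_mul_of_nonneg_left _ (abs_nonneg _)
        rw [abs_pow, abs_of_nonneg h0]
        exact pow_le_pow_left₀ h0 h1 i
    _ ≤ B m := by unfold B; linarith

/-- scaling factor on the `m`-th block -/
noncomputable def al (m : ℕ) : ℝ := ((m : ℝ) + 1)⁻¹ * (B m)⁻¹

lemma al_pos (m : ℕ) : 0 < al m := by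
  have := B_pos m
  have : (0:ℝ) < (m:ℝ) + 1 := by positivity
  unfold al; positivity

/-- left endpoints of the blocks -/
noncomputable def s (m : ℕ) : ℝ := m * (m + 1) / 2

lemma s_zero : s 0 = 0 := by simp [s]

lemma s_succ (m : ℕ) : s (m + 1) = s m + (m + 1) := by
  unfold s; push_cast; ring

lemma s_nonneg (m : ℕ) : 0 ≤ s m := by unfold s; positivity

lemma s_mono : Monotone s := by
  intro i j h
  unfold s
  have hij : (i : ℝ) ≤ j := by exact_mod_cast h
  have : (0:ℝ) ≤ i := by positivity
  nlinarith

lemma le_s (m : ℕ) : (m : ℝ) ≤ s (m + 1) := by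
  unfold s; push_cast
  nlinarith [Nat.cast_nonneg (α := ℝ) m]

lemma exists_idx (x : ℝ) : ∃ m, x < s (m + 1) := by
  obtain ⟨n, hn⟩ := exists_nat_gt x
  exact ⟨n, lt_of_lt_of_le hn (le_s n)⟩

/-- block index of a point -/
noncomputable def idx (x : ℝ) : ℕ := Nat.find (exists_idx x)

lemma lt_s_idx (x : ℝ) : x < s (idx x + 1) := Nat.find_spec (exists_idx x)

lemma s_idx_le {x : ℝ} (hx : 0 ≤ x) : s (idx x) ≤ x := by
  rcases Nat.eq_zero_or_pos (idx x) with h | h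
  · rw [h, s_zero]; exact hx
  · by_contra hc
    push_neg at hc
    have hm : idx x - 1 < idx x := Nat.sub_lt h one_pos
    have hfind := Nat.find_min (exists_idx x) hm
    rw [Nat.sub_add_cancel h] at hfind
    exact hfind hc

lemma idx_eq {m : ℕ} {x : ℝ} (h1 : s m ≤ x) (h2 : x < s (m + 1)) : idx x = m := by
  have hle : idx x ≤ m := Nat.find_le h2
  rcases lt_or_eq_of_le hle with h | h
  · exfalso
    have : x < s (idx x + 1) := lt_s_idx x
    have : s (idx x + 1) ≤ s m := s_mono h
    linarith [lt_s_idx x]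
  · exact h

/-- the universal activation function -/
noncomputable def sig (x : ℝ) : ℝ :=
  if 0 ≤ x then 1 + al (idx x) * (P (idx x)).eval (x - s (idx x)) else 0

lemma sig_dist {x : ℝ} (hx : 0 ≤ x) : |sig x - 1| ≤ ((idx x : ℝ) + 1)⁻¹ := by
  rw [sig, if_pos hx]
  have h0 : 0 ≤ x - s (idx x) := by linarith [s_idx_le hx]
  have h1 : x - s (idx x) ≤ (idx x : ℝ) + 1 := by
    have := lt_s_idx x
    rw [s_succ] at this
    push_cast at this ⊢
    linarith
  have hB := eval_le_B (idx x) h0 h1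
  have hBpos := B_pos (idx x)
  have : |al (idx x) * (P (idx x)).eval (x - s (idx x))| ≤ ((idx x : ℝ) + 1)⁻¹ := by
    rw [abs_mul, abs_of_pos (al_pos _)]
    unfold al
    rw [mul_assoc]
    have hn : (0:ℝ) < ((idx x : ℝ) + 1)⁻¹ := by positivity
    have : (B (idx x))⁻¹ * |(P (idx x)).eval (x - s (idx x))| ≤ 1 := by
      rw [inv_mul_le_iff₀ hBpos, mul_one]
      exact hB
    nlinarith
  calc |1 + al (idx x) * (P (idx x)).eval (x - s (idx x)) - 1|
      = |al (idx x) * (P (idx x)).eval (x - s (idx x))| := by ring_nf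
    _ ≤ _ := this

lemma idx_large {N : ℕ} {x : ℝ} (hx : s N ≤ x) : N ≤ idx x := by
  by_contra h
  push_neg at h
  have h1 : idx x + 1 ≤ N := h
  have : s (idx x + 1) ≤ s N := s_mono h1
  linarith [lt_s_idx x]

lemma sig_tendsto_atTop : Tendsto sig atTop (nhds 1) := by
  rw [Metric.tendsto_atTop]
  intro ε hε
  obtain ⟨N, hN⟩ := exists_nat_gt ε⁻¹
  refine ⟨max (s N) 0, fun x hx => ?_⟩
  have hx0 : 0 ≤ x := le_trans (le_max_right _ _) hx
  have hxN : s N ≤ x := le_trans (le_max_left _ _) hx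
  have h1 : N ≤ idx x := idx_large hxN
  have h2 : |sig x - 1| ≤ ((idx x : ℝ) + 1)⁻¹ := sig_dist hx0
  have h3 : ((idx x : ℝ) + 1)⁻¹ ≤ ((N : ℝ) + 1)⁻¹ := by
    apply inv_anti₀ (by positivity)
    push_cast
    exact_mod_cast Nat.add_le_add_right h1 1
  have h4 : ((N : ℝ) + 1)⁻¹ < ε := by
    rw [inv_lt_comm₀ (by positivity) hε] at *
    · linarith
  rw [Real.dist_eq]
  linarith

lemma sig_tendsto_atBot : Tendsto sig atBot (nhds 0) := by
  have h : sig =ᶠ[atBot] fun _ => (0:ℝ) := by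
    filter_upwards [eventually_lt_atBot (0:ℝ)] with x hx
    rw [sig, if_neg (not_le.mpr hx)]
  exact (tendsto_congr' h).mpr tendsto_const_nhds

/-- rational polynomials approximate real polynomials on compacts -/
lemma rat_approx (Q : Polynomial ℝ) (d δ : ℝ) (hδ : 0 < δ) :
    ∃ r : Polynomial ℚ, ∀ t ∈ Set.Icc (0:ℝ) d,
      |(r.map (algebraMap ℚ ℝ)).eval t - Q.eval t| < δ := by
  set N := Q.natDegree
  set K := max 1 d with hK
  have hK1 : (1:ℝ) ≤ K := le_max_left _ _
  have hKN : (0:ℝ) < K ^ N := by positivity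
  set δ' := δ / (2 * (N + 1) * K ^ N) with hδ'
  have hδ'pos : 0 < δ' := by
    apply div_pos hδ
    positivity
  have hc : ∀ i : ℕ, ∃ q : ℚ, |Q.coeff i - (q:ℝ)| < δ' := fun i =>
    exists_rat_near (Q.coeff i) hδ'pos
  choose c hcs using hc
  refine ⟨∑ i ∈ Finset.range (N + 1), Polynomial.C (c i) * Polynomial.X ^ i, ?_⟩
  intro t ht
  obtain ⟨ht0, htd⟩ := ht
  have htK : t ≤ K := le_trans htd (le_max_right _ _)
  have hmap : (Polynomial.map (algebraMap ℚ ℝ)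
      (∑ i ∈ Finset.range (N + 1), Polynomial.C (c i) * Polynomial.X ^ i)).eval t
      = ∑ i ∈ Finset.range (N + 1), (c i : ℝ) * t ^ i := by
    rw [Polynomial.map_sum]
    rw [Polynomial.eval_finset_sum]
    apply Finset.sum_congr rfl
    intro i _
    simp
  rw [hmap, Polynomial.eval_eq_sum_range]
  rw [← Finset.sum_sub_distrib]
  have hterm : ∀ i ∈ Finset.range (N + 1),
      |(c i : ℝ) * t ^ i - Q.coeff i * t ^ i| ≤ δ' * K ^ N := by
    intro i hi
    rw [← sub_mul, abs_mul]
    have h1 : |(c i : ℝ) - Q.coeff i| ≤ δ' := by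
      have := hcs i
      rw [abs_sub_comm] at this
      linarith
    have h2 : |t ^ i| ≤ K ^ N := by
      rw [abs_pow, abs_of_nonneg ht0]
      calc t ^ i ≤ K ^ i := pow_le_pow_left₀ ht0 htK i
        _ ≤ K ^ N := pow_le_pow_right₀ hK1 (Nat.lt_succ_iff.mp (Finset.mem_range.mp hi))
    exact mul_le_mul h1 h2 (abs_nonneg _) (le_of_lt hδ'pos)
  calc |∑ i ∈ Finset.range (N + 1), ((c i : ℝ) * t ^ i - Q.coeff i * t ^ i)|
      ≤ ∑ i ∈ Finset.range (N + 1), |(c i : ℝ) * t ^ i - Q.coeff i * t ^ i| :=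
        Finset.abs_sum_le_sum_abs _ _
    _ ≤ ∑ _i ∈ Finset.range (N + 1), δ' * K ^ N := Finset.sum_le_sum hterm
    _ = (N + 1) * (δ' * K ^ N) := by rw [Finset.sum_const, Finset.card_range]; push_cast; ring
    _ = δ / 2 := by rw [hδ']; field_simp
    _ < δ := by linarith

lemma exists_block (r : Polynomial ℚ) (d : ℝ) :
    ∃ m : ℕ, P m = r.map (algebraMap ℚ ℝ) ∧ d < (m : ℝ) + 1 := by
  obtain ⟨j, hj⟩ := e_surj r
  obtain ⟨i, hi⟩ := exists_nat_gt d
  refine ⟨Nat.pair i j, ?_, ?_⟩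
  · rw [P, Nat.unpair_pair, hj]
  · have : i ≤ Nat.pair i j := Nat.left_le_pair i j
    have h2 : (i : ℝ) ≤ Nat.pair i j := by exact_mod_cast this
    linarith

theorem main :
    ∃ σ : ℝ → ℝ,
      Filter.Tendsto σ Filter.atBot (nhds 0) ∧
      Filter.Tendsto σ Filter.atTop (nhds 1) ∧
      ∀ (a b : ℝ), a < b → ∀ f : ℝ → ℝ, ContinuousOn f (Set.Icc a b) →
        ∀ ε : ℝ, 0 < ε →
          ∃ c₁ c₂ θ₁ θ₂ : ℝ, ∀ x ∈ Set.Icc a b,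
            |f x - c₁ * σ (x - θ₁) - c₂ * σ (x - θ₂)| < ε := by
  refine ⟨sig, sig_tendsto_atBot, sig_tendsto_atTop, ?_⟩
  intro a b hab f hf ε hε
  set d := b - a with hd
  have hd0 : 0 < d := by simp [hd]; linarith
  obtain ⟨Q, hQ⟩ := exists_polynomial_near_of_continuousOn a b f hf (ε/4) (by linarith)
  set Q' := Q.comp (Polynomial.X + Polynomial.C a) with hQ'def
  have hQ'eval : ∀ t : ℝ, Q'.eval t = Q.eval (t + a) := by
    intro t; simp [hQ'def, Polynomial.eval_comp]
  obtain ⟨r, hr⟩ := rat_approx Q' d (ε/4) (by linarith)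
  obtain ⟨m, hPm, hdm⟩ := exists_block r d
  have halpos := al_pos m
  have hδ2 : 0 < al m * (ε/4) := by positivity
  obtain ⟨T, hT⟩ := (Metric.tendsto_atTop.mp sig_tendsto_atTop) (al m * (ε/4)) hδ2
  refine ⟨(al m)⁻¹, -(al m)⁻¹, a - s m, a - T, ?_⟩
  intro x hx
  obtain ⟨hax, hxb⟩ := hx
  have hxa : 0 ≤ x - a := by linarith
  have hxd : x - a ≤ d := by simp [hd]; linarith
  have hge : s m ≤ x - (a - s m) := by linarith
  have hlt : x - (a - s m) < s (m + 1) := by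
    rw [s_succ]
    have : x - a < (m : ℝ) + 1 := lt_of_le_of_lt hxd hdm
    linarith
  have hpos : 0 ≤ x - (a - s m) := le_trans (s_nonneg m) hge
  have hidx : idx (x - (a - s m)) = m := idx_eq hge hlt
  have hs1 : sig (x - (a - s m))
      = 1 + al m * (r.map (algebraMap ℚ ℝ)).eval (x - a) := by
    rw [sig, if_pos hpos, hidx, hPm]
    congr 2
    ring
  have hc1 : (al m)⁻¹ * sig (x - (a - s m))
      = (al m)⁻¹ + (r.map (algebraMap ℚ ℝ)).eval (x - a) := by
    rw [hs1, mul_add, mul_one, ← mul_assoc, inv_mul_cancel₀ (ne_of_gt halpos), one_mul]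
  have hT' : |sig (x - (a - T)) - 1| < al m * (ε/4) := by
    have h1 : T ≤ x - (a - T) := by linarith
    have := hT _ h1
    rwa [Real.dist_eq] at this
  have e1 : |Q.eval x - f x| < ε/4 := hQ x ⟨hax, hxb⟩
  have e2 : |(r.map (algebraMap ℚ ℝ)).eval (x - a) - Q'.eval (x - a)| < ε/4 :=
    hr (x - a) ⟨hxa, hxd⟩
  have e3 : Q'.eval (x - a) = Q.eval x := by
    rw [hQ'eval]; ring_nf
  have key : f x - (al m)⁻¹ * sig (x - (a - s m)) - (-(al m)⁻¹) * sig (x - (a - T))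
      = (f x - (r.map (algebraMap ℚ ℝ)).eval (x - a))
        + (al m)⁻¹ * (sig (x - (a - T)) - 1) := by
    rw [hc1]; ring
  rw [key]
  have b1 : |f x - (r.map (algebraMap ℚ ℝ)).eval (x - a)| < ε/4 + ε/4 := by
    have h1 : |f x - Q.eval x| < ε/4 := by rw [abs_sub_comm]; exact e1
    have h2 : |Q.eval x - (r.map (algebraMap ℚ ℝ)).eval (x - a)| < ε/4 := by
      rw [abs_sub_comm, ← e3]; exact e2
    calc |f x - (r.map (algebraMap ℚ ℝ)).eval (x - a)|
        = |(f x - Q.eval x) + (Q.eval x - (r.map (algebraMap ℚ ℝ)).eval (x - a))| := by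
          ring_nf
      _ ≤ |f x - Q.eval x| + |Q.eval x - (r.map (algebraMap ℚ ℝ)).eval (x - a)| :=
          abs_add_le _ _
      _ < ε/4 + ε/4 := by linarith
  have b2 : |(al m)⁻¹ * (sig (x - (a - T)) - 1)| < ε/4 := by
    rw [abs_mul, abs_of_pos (inv_pos.mpr halpos)]
    have := mul_lt_mul_of_pos_left hT' (inv_pos.mpr halpos)
    rwa [← mul_assoc, inv_mul_cancel₀ (ne_of_gt halpos), one_mul] at this
  calc |(f x - (r.map (algebraMap ℚ ℝ)).eval (x - a))
        + (al m)⁻¹ * (sig (x - (a - T)) - 1)|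
      ≤ |f x - (r.map (algebraMap ℚ ℝ)).eval (x - a)|
        + |(al m)⁻¹ * (sig (x - (a - T)) - 1)| := abs_add_le _ _
    _ < (ε/4 + ε/4) + ε/4 := by linarith
    _ < ε := by linarith

end TwoNeuron


/-- There exists a sigmoidal activation function `σ` such that any continuous function on any
finite segment `[a,b]` can be approximated arbitrarily well by a single hidden layer network
with fixed weight `1` and two hidden neurons. -/
theorem exists_universal_sigmoidal_two_neurons :
    ∃ σ : ℝ → ℝ,
      Filter.Tendsto σ Filter.atBot (nhds 0) ∧
      Filter.Tendsto σ Filter.atTop (nhds 1) ∧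
      ∀ (a b : ℝ), a < b → ∀ f : ℝ → ℝ, ContinuousOn f (Set.Icc a b) →
        ∀ ε : ℝ, 0 < ε →
          ∃ c₁ c₂ θ₁ θ₂ : ℝ, ∀ x ∈ Set.Icc a b,
            |f x - c₁ * σ (x - θ₁) - c₂ * σ (x - θ₂)| < ε := by
  exact TwoNeuron.main
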